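/- (Nonnegativity of the Jacobian-difference determinant and its exact vanishing locus.) For all p, q ∈ ℝ² with p ≠ o and q ≠ o, det(J_h(p) − J_h(q)) ≥ 0, and det(J_h(p) − J_h(q)) = 0 if and only if there exists a real t > 0 with p − o = t·(q − o) (i.e. p − o and q − o are positively proportional). -/

import Mathlib

noncomputable section

/-- The sensor location `o = (a, b)`. -/
def oPt (a b : ℝ) : EuclideanSpace ℝ (Fin 2) := WithLp.toLp 2 ![a, b]

/-- Matrix–vector multiplication, viewed as a map on the Euclidean plane. -/
def mv (M : Matrix (Fin 2) (Fin 2) ℝ) (u : EuclideanSpace ℝ (Fin 2)) :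
    EuclideanSpace ℝ (Fin 2) := WithLp.toLp 2 (M.mulVec u)

/-- Range `r(p) = √((p₁−a)² + (p₂−b)²)` to the sensor located at `(a, b)`. -/
def rr (a b : ℝ) (p : EuclideanSpace ℝ (Fin 2)) : ℝ :=
  Real.sqrt ((p 0 - a) ^ 2 + (p 1 - b) ^ 2)

/-- Bearing `θ(p)`: polar angle in `(−π, π]` of the complex number `(p₁−a) + i(p₂−b)`. -/
def theta (a b : ℝ) (p : EuclideanSpace ℝ (Fin 2)) : ℝ :=
  Complex.arg ⟨p 0 - a, p 1 - b⟩

/-- Jacobian matrix of the range–bearing measurement map at `p`. -/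
def Jh (a b : ℝ) (p : EuclideanSpace ℝ (Fin 2)) : Matrix (Fin 2) (Fin 2) ℝ :=
  !![(p 0 - a) / rr a b p, (p 1 - b) / rr a b p;
     -(p 1 - b) / (rr a b p) ^ 2, (p 0 - a) / (rr a b p) ^ 2]

/-- The range–bearing measurement map `h(p) = (r(p), θ(p))`. -/
def hMeas (a b : ℝ) (p : EuclideanSpace ℝ (Fin 2)) : EuclideanSpace ℝ (Fin 2) :=
  WithLp.toLp 2 ![rr a b p, theta a b p]

/-- The linearization remainder `g(u) = h(x + Eu) − h(x) − J_h(x)·(Eu)`. -/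
def gRem (a b : ℝ) (x : EuclideanSpace ℝ (Fin 2)) (E : Matrix (Fin 2) (Fin 2) ℝ)
    (u : EuclideanSpace ℝ (Fin 2)) : EuclideanSpace ℝ (Fin 2) :=
  hMeas a b (x + mv E u) - hMeas a b x - mv (Jh a b x) (mv E u)

lemma aux_det (u1 u2 v1 v2 r s D : ℝ) (hr : 0 < r) (hs : 0 < s)
    (hr2 : r ^ 2 = u1 ^ 2 + u2 ^ 2) (hs2 : s ^ 2 = v1 ^ 2 + v2 ^ 2)
    (hD : D = (u1 / r - v1 / s) * (u1 / r ^ 2 - v1 / s ^ 2) -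
        (u2 / r - v2 / s) * (-u2 / r ^ 2 - -v2 / s ^ 2)) :
    0 ≤ D ∧ (D = 0 ↔ ∃ t : ℝ, 0 < t ∧ u1 = t * v1 ∧ u2 = t * v2) := by
  have hr0 := hr.ne'
  have hs0 := hs.ne'
  have expand : D * (r ^ 2 * s ^ 2) =
      (u1 ^ 2 + u2 ^ 2) * (s ^ 2 / r) + (v1 ^ 2 + v2 ^ 2) * (r ^ 2 / s)
        - (u1 * v1 + u2 * v2) * (r + s) := by
    rw [hD]; field_simp; ring
  have hkey : D * (r ^ 2 * s ^ 2) = (r + s) * (r * s - (u1 * v1 + u2 * v2)) := by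
    rw [expand, ← hr2, ← hs2]; field_simp; ring
  have hdot : u1 * v1 + u2 * v2 ≤ r * s := by
    nlinarith [sq_nonneg (u1 * s - v1 * r), sq_nonneg (u2 * s - v2 * r), mul_pos hr hs]
  have hc : (0:ℝ) < r ^ 2 * s ^ 2 := by positivity
  have hnn : 0 ≤ D := by
    nlinarith [hkey, mul_nonneg (by positivity : (0:ℝ) ≤ r + s)
      (by linarith : (0:ℝ) ≤ r * s - (u1 * v1 + u2 * v2))]
  refine ⟨hnn, ?_, ?_⟩
  · intro h0
    have h1 : (r + s) * (r * s - (u1 * v1 + u2 * v2)) = 0 := by rw [← hkey, h0, zero_mul]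
    have h2 : r * s = u1 * v1 + u2 * v2 := by
      rcases mul_eq_zero.1 h1 with h | h
      · linarith
      · linarith
    have hcross : u1 * v2 - u2 * v1 = 0 := by
      have hc2 : (u1 * v2 - u2 * v1) ^ 2 = 0 := by
        linear_combination (-(s ^ 2)) * hr2 + (-(u1 ^ 2 + u2 ^ 2)) * hs2 +
          (r * s + (u1 * v1 + u2 * v2)) * h2
      exact (pow_eq_zero_iff two_ne_zero).mp hc2
    refine ⟨r / s, by positivity, ?_, ?_⟩
    · have h3 : u1 * s ^ 2 - r * v1 * s = 0 := by
        linear_combination u1 * hs2 - v1 * h2 + v2 * hcross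
      have h4 : u1 * s = r * v1 := by
        have h5 : (u1 * s - r * v1) * s = 0 := by linear_combination h3
        rcases mul_eq_zero.1 h5 with h | h
        · linarith
        · exact absurd h hs0
      field_simp
      linear_combination h4
    · have h3 : u2 * s ^ 2 - r * v2 * s = 0 := by
        linear_combination u2 * hs2 - v2 * h2 - v1 * hcross
      have h4 : u2 * s = r * v2 := by
        have h5 : (u2 * s - r * v2) * s = 0 := by linear_combination h3
        rcases mul_eq_zero.1 h5 with h | h
        · linarith
        · exact absurd h hs0
      field_simp
      linear_combination h4
  · rintro ⟨t, ht, e1, e2⟩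
    have h5 : r ^ 2 = (t * s) ^ 2 := by
      rw [hr2, e1, e2]; linear_combination (-t ^ 2) * hs2
    have hrts : r = t * s := by
      have h6 : (r - t * s) * (r + t * s) = 0 := by linear_combination h5
      rcases mul_eq_zero.1 h6 with h | h
      · linarith
      · linarith [mul_pos ht hs]
    have h7 : D * (r ^ 2 * s ^ 2) = 0 := by
      rw [hkey, hrts, e1, e2]; linear_combination ((t * s + s) * t) * hs2
    rcases mul_eq_zero.1 h7 with h | h
    · exact h
    · exact absurd h hc.ne'


/-- **Nonnegativity of the Jacobian-difference determinant and its vanishing locus.** -/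
theorem det_jacobianDiff_nonneg_and_vanishing
    (a b : ℝ) (p q : EuclideanSpace ℝ (Fin 2))
    (hp : p ≠ oPt a b)
    (hq : q ≠ oPt a b) :
    0 ≤ (Jh a b p - Jh a b q).det ∧
      ((Jh a b p - Jh a b q).det = 0 ↔
        ∃ t : ℝ, 0 < t ∧
          p - oPt a b =
            t • (q - oPt a b)) := by
  have hpu : (p 0 - a) ^ 2 + (p 1 - b) ^ 2 > 0 := by
    rcases (show p 0 - a ≠ 0 ∨ p 1 - b ≠ 0 by
      by_contra h
      push_neg at h
      exact hp (PiLp.ext fun i => by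
        fin_cases i <;> simp [oPt] <;> [linarith [h.1]; linarith [h.2]])) with h | h
    · positivity
    · positivity
  have hqu : (q 0 - a) ^ 2 + (q 1 - b) ^ 2 > 0 := by
    rcases (show q 0 - a ≠ 0 ∨ q 1 - b ≠ 0 by
      by_contra h
      push_neg at h
      exact hq (PiLp.ext fun i => by
        fin_cases i <;> simp [oPt] <;> [linarith [h.1]; linarith [h.2]])) with h | h
    · positivity
    · positivity
  have hr : 0 < rr a b p := Real.sqrt_pos.2 hpu
  have hs : 0 < rr a b q := Real.sqrt_pos.2 hqu
  have hr2 : (rr a b p) ^ 2 = (p 0 - a) ^ 2 + (p 1 - b) ^ 2 := Real.sq_sqrt hpu.le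
  have hs2 : (rr a b q) ^ 2 = (q 0 - a) ^ 2 + (q 1 - b) ^ 2 := Real.sq_sqrt hqu.le
  have hdet : (Jh a b p - Jh a b q).det =
      ((p 0 - a) / rr a b p - (q 0 - a) / rr a b q) *
        ((p 0 - a) / (rr a b p) ^ 2 - (q 0 - a) / (rr a b q) ^ 2) -
      ((p 1 - b) / rr a b p - (q 1 - b) / rr a b q) *
        (-(p 1 - b) / (rr a b p) ^ 2 - -(q 1 - b) / (rr a b q) ^ 2) := by
    simp [Jh, Matrix.det_fin_two, Matrix.sub_apply]
  obtain ⟨hnn, hiff⟩ := aux_det (p 0 - a) (p 1 - b) (q 0 - a) (q 1 - b)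
    (rr a b p) (rr a b q) _ hr hs hr2 hs2 hdet
  refine ⟨hnn, hiff.trans ⟨?_, ?_⟩⟩
  · rintro ⟨t, ht, e1, e2⟩
    refine ⟨t, ht, PiLp.ext fun i => ?_⟩
    fin_cases i <;> simp [oPt] <;> [linarith [e1]; linarith [e2]]
  · rintro ⟨t, ht, hpq⟩
    exact ⟨t, ht, by simpa [oPt] using congrArg (fun v => v 0) hpq, by simpa [oPt] using congrArg (fun v => v 1) hpq⟩
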